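/- Let n ≥ 1, let G be a real symmetric positive definite n×n matrix and ξ an n×n complex symmetric matrix with the spectral radius of M := ξ·G·ξ̄·G strictly less than 1, and let S be the unique diagonalizable matrix with positive real eigenvalues satisfying S² = 𝟙 − M. Then the matrix S·G⁻¹ is Hermitian and positive definite. -/

import Mathlib

open ComplexOrder

/-- A complex matrix is diagonalizable with all eigenvalues real and strictly positive. -/
def DiagonalizablePosReal {n : ℕ} (S : Matrix (Fin n) (Fin n) ℂ) : Prop :=
  ∃ (Q : Matrix (Fin n) (Fin n) ℂ) (d : Fin n → ℝ),
    IsUnit Q.det ∧ (∀ i, 0 < d i) ∧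
    S = Q * Matrix.diagonal (fun i => (d i : ℂ)) * Q⁻¹

open Matrix

lemma myPosDefConj {n : ℕ} {A B : Matrix (Fin n) (Fin n) ℂ}
    (hA : A.PosDef) (hB : IsUnit B) : (Bᴴ * A * B).PosDef := by
  refine posDef_iff_dotProduct_mulVec.mpr ⟨isHermitian_conjTranspose_mul_mul B hA.1, fun x hx => ?_⟩
  have hBx : B *ᵥ x ≠ 0 := by
    intro h
    exact hx ((Matrix.mulVec_injective_iff_isUnit.mpr hB) (by simpa using h))
  have h := hA.dotProduct_mulVec_pos hBx
  simpa only [star_mulVec, dotProduct_mulVec, vecMul_vecMul, mulVec_mulVec,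
    Matrix.mul_assoc] using h

lemma myPosDefMap {n : ℕ} {G : Matrix (Fin n) (Fin n) ℝ} (hG : G.PosDef) :
    (G.map Complex.ofReal).PosDef := by
  have hherm : (G.map Complex.ofReal).IsHermitian :=
    hG.1.map Complex.ofReal (fun a => (Complex.conj_ofReal a).symm)
  refine posDef_iff_dotProduct_mulVec.mpr ⟨hherm, fun x hx => ?_⟩
  set z := star x ⬝ᵥ ((G.map Complex.ofReal) *ᵥ x) with hz
  set a : Fin n → ℝ := fun i => (x i).re with ha
  set b : Fin n → ℝ := fun i => (x i).im with hb
  have him : z.im = 0 := by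
    have hzz : star z = z := by
      nth_rewrite 2 [hz]
      nth_rewrite 1 [hz]
      conv_lhs => rw [star_dotProduct, star_star, star_mulVec, ← dotProduct_mulVec, hherm.eq]
    have := congrArg Complex.im hzz
    simp only [Complex.star_def, Complex.conj_im] at this
    linarith
  have hre : z.re = a ⬝ᵥ (G *ᵥ a) + b ⬝ᵥ (G *ᵥ b) := by
    rw [hz]
    simp only [dotProduct, mulVec, dotProduct, Pi.star_apply, map_apply,
      Complex.re_sum, Complex.mul_re, Complex.im_sum, Complex.star_def,
      Complex.conj_re, Complex.conj_im, Complex.ofReal_re, Complex.ofReal_im, Complex.mul_im,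
      zero_mul, sub_zero, Finset.mul_sum]
    rw [← Finset.sum_add_distrib]
    refine Finset.sum_congr rfl fun i _ => ?_
    rw [← Finset.sum_add_distrib]
    refine Finset.sum_congr rfl fun j _ => ?_
    ring
  have hab : a ≠ 0 ∨ b ≠ 0 := by
    by_contra hc
    push_neg at hc
    apply hx
    funext i
    have h1 := congrFun hc.1 i
    have h2 := congrFun hc.2 i
    simp only [ha, hb, Pi.zero_apply] at h1 h2
    exact Complex.ext h1 h2
  have hpos : 0 < z.re := by
    rw [hre]
    rcases hab with h | h
    · have h1 : 0 < a ⬝ᵥ (G *ᵥ a) := by simpa using hG.dotProduct_mulVec_pos h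
      have h2 : 0 ≤ b ⬝ᵥ (G *ᵥ b) := by simpa using hG.posSemidef.dotProduct_mulVec_nonneg b
      linarith
    · have h1 : 0 ≤ a ⬝ᵥ (G *ᵥ a) := by simpa using hG.posSemidef.dotProduct_mulVec_nonneg a
      have h2 : 0 < b ⬝ᵥ (G *ᵥ b) := by simpa using hG.dotProduct_mulVec_pos h
      linarith
  have : z = Complex.ofReal z.re := Complex.ext (by simp) (by simp [him])
  rw [this]
  exact_mod_cast hpos
lemma myPosDefConj' {n : ℕ} {A U : Matrix (Fin n) (Fin n) ℂ}
    (hA : A.PosDef) (hU1 : star U * U = 1) (hU2 : U * star U = 1) :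
    (U * A * star U).PosDef := by
  have h := myPosDefConj hA (⟨⟨star U, U, hU1, hU2⟩, rfl⟩ : IsUnit (star U))
  simpa only [Matrix.star_eq_conjTranspose, conjTranspose_conjTranspose] using h

lemma myOneSubPosDef {n : ℕ} {N : Matrix (Fin n) (Fin n) ℂ} (hN : N.PosSemidef)
    (hs : ∀ μ ∈ spectrum ℂ N, ‖μ‖ < 1) : (1 - N).PosDef := by
  classical
  set U : Matrix (Fin n) (Fin n) ℂ := (hN.1.eigenvectorUnitary : Matrix (Fin n) (Fin n) ℂ)
    with hUdef
  have hU1 : star U * U = 1 := mem_unitaryGroup_iff'.mp hN.1.eigenvectorUnitary.2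
  have hU2 : U * star U = 1 := mem_unitaryGroup_iff.mp hN.1.eigenvectorUnitary.2
  have hev_lt : ∀ i, hN.1.eigenvalues i < 1 := by
    intro i
    have h1 : hN.1.eigenvalues i ∈ spectrum ℝ N := hN.1.eigenvalues_mem_spectrum_real i
    have h2 : ((hN.1.eigenvalues i : ℝ) : ℂ) ∈ spectrum ℂ N := by
      have := spectrum.algebraMap_mem ℂ h1
      simpa using this
    have h3 := hs _ h2
    rw [Complex.norm_real] at h3
    exact lt_of_le_of_lt (le_abs_self _) h3
  have hsp : N = U * diagonal (RCLike.ofReal ∘ hN.1.eigenvalues) * star U :=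
    hN.1.spectral_theorem
  have hkey : U * (1 - diagonal (RCLike.ofReal ∘ hN.1.eigenvalues)) * star U = 1 - N := by
    rw [Matrix.mul_sub, Matrix.mul_one, Matrix.sub_mul, hU2, ← hsp]
  have hdiag : (1 : Matrix (Fin n) (Fin n) ℂ) - diagonal (RCLike.ofReal ∘ hN.1.eigenvalues)
      = diagonal (fun i => ((1 - hN.1.eigenvalues i : ℝ) : ℂ)) := by
    rw [← diagonal_one, diagonal_sub]
    congr 1
    funext i
    push_cast
    rfl
  have hpd : (diagonal (fun i => ((1 - hN.1.eigenvalues i : ℝ) : ℂ))).PosDef := by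
    rw [posDef_diagonal_iff]
    intro i
    rw [Complex.zero_lt_real]
    linarith [hev_lt i]
  rw [← hkey, hdiag]
  exact myPosDefConj' hpd hU1 hU2

lemma myUnique {n : ℕ} {X Y : Matrix (Fin n) (Fin n) ℂ}
    (hX : DiagonalizablePosReal X) (hY : DiagonalizablePosReal Y)
    (h : X * X = Y * Y) : X = Y := by
  obtain ⟨Q, d, hQ, hd, rfl⟩ := hX
  obtain ⟨P, e, hP, he, rfl⟩ := hY
  have hQi : Q⁻¹ * Q = 1 := nonsing_inv_mul Q hQ
  have hQi' : Q * Q⁻¹ = 1 := mul_nonsing_inv Q hQ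
  have hPi : P⁻¹ * P = 1 := nonsing_inv_mul P hP
  have hPi' : P * P⁻¹ = 1 := mul_nonsing_inv P hP
  set D := Matrix.diagonal (fun i => ((d i : ℂ))) with hD
  set E := Matrix.diagonal (fun i => ((e i : ℂ))) with hE
  have cQ1 : ∀ X : Matrix (Fin n) (Fin n) ℂ, Q⁻¹ * (Q * X) = X := fun X => by
    rw [← Matrix.mul_assoc, hQi, Matrix.one_mul]
  have cQ2 : ∀ X : Matrix (Fin n) (Fin n) ℂ, Q * (Q⁻¹ * X) = X := fun X => by
    rw [← Matrix.mul_assoc, hQi', Matrix.one_mul]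
  have cP1 : ∀ X : Matrix (Fin n) (Fin n) ℂ, P⁻¹ * (P * X) = X := fun X => by
    rw [← Matrix.mul_assoc, hPi, Matrix.one_mul]
  have cP2 : ∀ X : Matrix (Fin n) (Fin n) ℂ, P * (P⁻¹ * X) = X := fun X => by
    rw [← Matrix.mul_assoc, hPi', Matrix.one_mul]
  have h2 : (P⁻¹ * Q) * (D * D) = (E * E) * (P⁻¹ * Q) := by
    have h' := congrArg (fun Z => P⁻¹ * Z * Q) h
    simp only [Matrix.mul_assoc, cQ1, cQ2, cP1, cP2, hQi, hPi, hQi', hPi',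
      Matrix.mul_one, Matrix.one_mul] at h' ⊢
    exact h'
  have key : (P⁻¹ * Q) * D = E * (P⁻¹ * Q) := by
    have hDD : D * D = Matrix.diagonal (fun i => ((d i : ℂ) * d i)) := by
      rw [hD, diagonal_mul_diagonal]
    have hEE : E * E = Matrix.diagonal (fun i => ((e i : ℂ) * e i)) := by
      rw [hE, diagonal_mul_diagonal]
    ext i j
    have h3 : (P⁻¹ * Q) i j * ((d j : ℂ) * d j) = ((e i : ℂ) * e i) * ((P⁻¹ * Q) i j) := by
      have h4 := congrFun (congrFun h2 i) j
      rw [hDD, hEE] at h4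
      rwa [Matrix.mul_diagonal, Matrix.diagonal_mul] at h4
    rw [hD, hE, Matrix.mul_diagonal, Matrix.diagonal_mul]
    rcases eq_or_ne ((P⁻¹ * Q) i j) 0 with h0 | h0
    · simp [h0]
    · have h5 : ((d j : ℂ) * d j) = ((e i : ℂ) * e i) :=
        mul_left_cancel₀ h0 (h3.trans (mul_comm _ _))
      have h6 : d j * d j = e i * e i := by exact_mod_cast h5
      have h7 : d j = e i := (mul_self_inj (hd j).le (he i).le).mp h6
      rw [h7, mul_comm]
  have h'' := congrArg (fun Z => P * Z * Q⁻¹) key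
  simp only [Matrix.mul_assoc, cQ1, cQ2, cP1, cP2, hQi, hPi, hQi', hPi',
    Matrix.mul_one, Matrix.one_mul] at h'' ⊢
  exact h''

/-- with `M = ξ·G·ξ̄·G` of spectral radius `< 1` and `S` the unique
diagonalizable matrix with positive real eigenvalues satisfying `S² = 𝟙 − M`, the matrix
`S·G⁻¹` is Hermitian and positive definite. -/
theorem statement2 (n : ℕ) (hn : 1 ≤ n)
    (G : Matrix (Fin n) (Fin n) ℝ) (hGsym : G.IsSymm) (hGpd : G.PosDef)
    (ξ : Matrix (Fin n) (Fin n) ℂ) (hξsym : ξ.IsSymm)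
    (M : Matrix (Fin n) (Fin n) ℂ)
    (hM : M = ξ * G.map Complex.ofReal * ξ.map (starRingEnd ℂ) * G.map Complex.ofReal)
    (hspec : ∀ μ ∈ spectrum ℂ M, ‖μ‖ < 1)
    (S : Matrix (Fin n) (Fin n) ℂ)
    (hSsq : S * S = 1 - M) (hSdiag : DiagonalizablePosReal S) :
    (S * (G.map Complex.ofReal)⁻¹).PosDef := by
  classical
  set g : Matrix (Fin n) (Fin n) ℂ := G.map Complex.ofReal with hgdef
  have hg : g.PosDef := myPosDefMap hGpd
  have hgs : g.PosSemidef := hg.posSemidef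
  open scoped MatrixOrder in set r : Matrix (Fin n) (Fin n) ℂ := CFC.sqrt g with hrdef
  have hr : r.PosSemidef := by open scoped MatrixOrder in exact (CFC.sqrt_nonneg g).posSemidef
  have hrr : r * r = g := by open scoped MatrixOrder in exact CFC.sqrt_mul_sqrt_self g hgs.nonneg
  have hrdet : IsUnit r.det := by
    have hdet : r.det * r.det = g.det := by rw [← det_mul, hrr]
    have hgne : g.det ≠ 0 := ne_of_gt hg.det_pos
    refine isUnit_iff_ne_zero.mpr fun h0 => hgne ?_
    rw [← hdet, h0, mul_zero]
  have hri : r⁻¹ * r = 1 := nonsing_inv_mul r hrdet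
  have hri' : r * r⁻¹ = 1 := mul_nonsing_inv r hrdet
  have hrh : r.IsHermitian := hr.1
  have hrinvh : (r⁻¹).IsHermitian := by
    rw [Matrix.IsHermitian, conjTranspose_nonsing_inv, hrh.eq]
  have hgr : g * r⁻¹ = r := by rw [← hrr, Matrix.mul_assoc, hri', Matrix.mul_one]
  have hrg : r * g⁻¹ = r⁻¹ := by
    rw [← hrr, Matrix.mul_inv_rev, ← Matrix.mul_assoc, hri', Matrix.one_mul]
  have cr1 : ∀ X : Matrix (Fin n) (Fin n) ℂ, r⁻¹ * (r * X) = X := fun X => by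
    rw [← Matrix.mul_assoc, hri, Matrix.one_mul]
  have cr2 : ∀ X : Matrix (Fin n) (Fin n) ℂ, r * (r⁻¹ * X) = X := fun X => by
    rw [← Matrix.mul_assoc, hri', Matrix.one_mul]
  set A' : Matrix (Fin n) (Fin n) ℂ := r * ξ * r with hA'def
  have hA'H : A'ᴴ = r * ξ.map (starRingEnd ℂ) * r := by
    have hxih : ξᴴ = ξ.map (starRingEnd ℂ) := by
      ext i j
      have hsymij : ξ j i = ξ i j := congrFun (congrFun hξsym i) j
      simp [conjTranspose_apply, Matrix.map_apply, hsymij, Complex.star_def]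
    rw [hA'def, conjTranspose_mul, conjTranspose_mul, hrh.eq, hxih, Matrix.mul_assoc]
  set N : Matrix (Fin n) (Fin n) ℂ := A' * A'ᴴ with hNdef
  have hNpsd : N.PosSemidef := posSemidef_self_mul_conjTranspose A'
  have hNM : N = r * M * r⁻¹ := by
    rw [hNdef, hA'H, hM]
    have e1 : (r * ξ * r) * (r * ξ.map (starRingEnd ℂ) * r)
        = r * (ξ * (g * (ξ.map (starRingEnd ℂ) * r))) := by
      rw [← hrr]; simp only [Matrix.mul_assoc]
    have e2 : r * (ξ * g * ξ.map (starRingEnd ℂ) * g) * r⁻¹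
        = r * (ξ * (g * (ξ.map (starRingEnd ℂ) * (g * r⁻¹)))) := by
      simp only [Matrix.mul_assoc]
    rw [hA'def, e1, e2, hgr]
  have hspecN : ∀ μ ∈ spectrum ℂ N, ‖μ‖ < 1 := by
    obtain ⟨u, hu'⟩ := (Matrix.isUnit_iff_isUnit_det r).mpr hrdet
    have hcoe : ((u⁻¹ : (Matrix (Fin n) (Fin n) ℂ)ˣ) : Matrix (Fin n) (Fin n) ℂ) = r⁻¹ := by
      rw [Matrix.coe_units_inv, hu']
    have hsp : spectrum ℂ N = spectrum ℂ M := by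
      rw [hNM, ← hcoe, ← hu']
      exact spectrum.units_conjugate
    rw [hsp]; exact hspec
  have hN1 : (1 - N).PosDef := myOneSubPosDef hNpsd hspecN
  set U : Matrix (Fin n) (Fin n) ℂ := (hN1.1.eigenvectorUnitary : Matrix (Fin n) (Fin n) ℂ)
    with hUdef
  have hU1 : star U * U = 1 := mem_unitaryGroup_iff'.mp hN1.1.eigenvectorUnitary.2
  have hU2 : U * star U = 1 := mem_unitaryGroup_iff.mp hN1.1.eigenvectorUnitary.2
  set ev : Fin n → ℝ := hN1.1.eigenvalues with hevdef
  have hevpos : ∀ i, 0 < ev i := fun i => hN1.eigenvalues_pos i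
  set D' : Matrix (Fin n) (Fin n) ℂ := diagonal (fun i => ((Real.sqrt (ev i) : ℝ) : ℂ))
    with hD'def
  set T : Matrix (Fin n) (Fin n) ℂ := U * D' * star U with hTdef
  have hdd : D' * D' = diagonal (RCLike.ofReal ∘ ev) := by
    rw [hD'def, diagonal_mul_diagonal]
    ext i j
    rcases eq_or_ne i j with rfl | hij
    · have h1 : Real.sqrt (ev i) * Real.sqrt (ev i) = ev i := Real.mul_self_sqrt (hevpos i).le
      simp only [diagonal_apply_eq, Function.comp_apply]
      rw [← Complex.ofReal_mul, h1]
      rfl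
    · simp [diagonal_apply_ne _ hij]
  have hTT : T * T = 1 - N := by
    have cU : ∀ X : Matrix (Fin n) (Fin n) ℂ, star U * (U * X) = X := fun X => by
      rw [← Matrix.mul_assoc, hU1, Matrix.one_mul]
    have hsp := hN1.1.spectral_theorem
    calc T * T = U * (D' * (star U * (U * (D' * star U)))) := by
          rw [hTdef]; simp only [Matrix.mul_assoc]
      _ = U * (D' * (D' * star U)) := by rw [cU]
      _ = U * diagonal (RCLike.ofReal ∘ ev) * star U := by
          rw [← Matrix.mul_assoc, ← Matrix.mul_assoc, Matrix.mul_assoc U D' D', hdd,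
            Matrix.mul_assoc U _ _]
      _ = 1 - N := hsp.symm
  set S' : Matrix (Fin n) (Fin n) ℂ := r⁻¹ * T * r with hS'def
  have hS'sq : S' * S' = 1 - M := by
    have e : T * (T * r) = (1 - N) * r := by rw [← Matrix.mul_assoc, hTT]
    calc S' * S' = r⁻¹ * (T * (r * (r⁻¹ * (T * r)))) := by
          rw [hS'def]; simp only [Matrix.mul_assoc]
      _ = r⁻¹ * ((1 - N) * r) := by rw [cr2, e]
      _ = 1 - M := by
          rw [hNM, Matrix.sub_mul, Matrix.one_mul, Matrix.mul_sub]
          simp only [Matrix.mul_assoc, cr1, hri, Matrix.mul_one]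
  have hUdet : IsUnit U.det :=
    (Matrix.isUnit_iff_isUnit_det U).mp ⟨⟨U, star U, hU2, hU1⟩, rfl⟩
  have hS'diag : DiagonalizablePosReal S' := by
    refine ⟨r⁻¹ * U, fun i => Real.sqrt (ev i), ?_, fun i => Real.sqrt_pos.mpr (hevpos i), ?_⟩
    · rw [det_mul, det_nonsing_inv]
      rw [Ring.inverse_eq_inv]
      exact (isUnit_iff_ne_zero.mpr (inv_ne_zero (isUnit_iff_ne_zero.mp hrdet))).mul hUdet
    · have hQinv : (r⁻¹ * U)⁻¹ = star U * r := by
        rw [Matrix.mul_inv_rev, inv_eq_left_inv hU1, nonsing_inv_nonsing_inv r hrdet]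
      rw [hQinv, hS'def, hTdef, ← hD'def]
      simp only [Matrix.mul_assoc]
  have hSS' : S = S' := myUnique hSdiag hS'diag (hSsq.trans hS'sq.symm)
  have hTpd : T.PosDef := by
    have hdpd : D'.PosDef := by
      rw [hD'def, posDef_diagonal_iff]
      intro i
      rw [Complex.zero_lt_real]
      exact Real.sqrt_pos.mpr (hevpos i)
    rw [hTdef]
    exact myPosDefConj' hdpd hU1 hU2
  have hfinal : S * g⁻¹ = (r⁻¹)ᴴ * T * r⁻¹ := by
    rw [hSS', hS'def, hrinvh.eq, Matrix.mul_assoc (r⁻¹ * T) r g⁻¹, hrg]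
  rw [hfinal]
  exact myPosDefConj hTpd ⟨⟨r⁻¹, r, hri, hri'⟩, rfl⟩
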